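/- Let J_+ be a geometric random variable with P[J_+ = k] = (1/2)^{k+1} for k = 0,1,2,…, let j_0 ≥ 0 be an integer, and let (x^{(j)})_{j≥0} be a sequence in ℝ^d converging to x*. Define p_J := (1/2)^{J_+ + 1} and the estimator X := x^{(j_0)} + p_J^{-1}(x^{(j_0 + J_+)} − x^{(max(j_0+J_+ −1, j_0))}). If the series ∑_j (x^{(j)}−x^{(j−1)}) converges absolutely, then E[X] = x* = lim_j x^{(j)}. -/

import Mathlib

/-- Unbiasedness of the MLMC estimator: with geometric weights P[J₊ = k] = (1/2)^{k+1},
the expectation of the estimator X = x^{(j₀)} + p_J⁻¹ (x^{(j₀+J₊)} − x^{(max(j₀+J₊−1, j₀))})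
equals the limit x*. -/
theorem stmt7 {d : ℕ} (x : ℕ → EuclideanSpace ℝ (Fin d)) (xstar : EuclideanSpace ℝ (Fin d))
    (j0 : ℕ)
    (hlim : Filter.Tendsto x Filter.atTop (nhds xstar))
    (habs : Summable fun j : ℕ => ‖x (j + 1) - x j‖) :
    (∑' k : ℕ, ((1 / 2 : ℝ) ^ (k + 1)) •
        (x j0 + ((2 : ℝ) ^ (k + 1)) • (x (j0 + k) - x (max (j0 + k - 1) j0)))) = xstar := by
  set g : ℕ → EuclideanSpace ℝ (Fin d) := fun k => x (j0 + k) - x (max (j0 + k - 1) j0) with hg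
  have hterm : ∀ k : ℕ, ((1 / 2 : ℝ) ^ (k + 1)) •
      (x j0 + ((2 : ℝ) ^ (k + 1)) • g k) = ((1 / 2 : ℝ) ^ (k + 1)) • x j0 + g k := by
    intro k
    rw [smul_add, smul_smul]
    congr 1
    rw [← mul_pow]
    norm_num
  -- first piece
  have h1 : HasSum (fun k : ℕ => ((1 / 2 : ℝ) ^ (k + 1)) • x j0) ((1 : ℝ) • x j0) := by
    have hgeo : HasSum (fun k : ℕ => (1 / 2 : ℝ) ^ (k + 1)) 1 := by
      have := hasSum_geometric_two
      have h := this.mul_left (1 / 2 : ℝ)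
      simpa [pow_succ, mul_comm, mul_left_comm] using h
    exact hgeo.smul_const (x j0)
  -- second piece: summability
  have hshift : ∀ k : ℕ, g (k + 1) = x (j0 + k + 1) - x (j0 + k) := by
    intro k
    simp only [hg]
    have h1' : j0 + (k + 1) - 1 = j0 + k := by omega
    have h2' : max (j0 + k) j0 = j0 + k := by omega
    rw [h1', h2']
    ring_nf
  have hsum_shift : Summable (fun k : ℕ => g (k + 1)) := by
    have : Summable (fun k : ℕ => ‖x (j0 + k + 1) - x (j0 + k)‖) := by
      have := (summable_nat_add_iff (f := fun j : ℕ => ‖x (j + 1) - x j‖) j0).mpr habs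
      simpa [add_comm, add_assoc, add_left_comm] using this
    refine Summable.of_norm ?_
    simpa [hshift] using this
  have hsumg : Summable g := (summable_nat_add_iff 1).mp hsum_shift
  have hpartial : ∀ n : ℕ, ∑ k ∈ Finset.range (n + 1), g k = x (j0 + n) - x j0 := by
    intro n
    induction n with
    | zero =>
      simp [hg]
    | succ n ih =>
      rw [Finset.sum_range_succ, ih, hshift]
      abel
  have h2 : HasSum g (xstar - x j0) := by
    rw [hsumg.hasSum_iff_tendsto_nat]
    rw [← Filter.tendsto_add_atTop_iff_nat 1]
    simp only [hpartial]
    have : Filter.Tendsto (fun n : ℕ => x (j0 + n)) Filter.atTop (nhds xstar) := by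
      have := hlim.comp (Filter.tendsto_add_atTop_nat j0)
      simpa [Function.comp_def, add_comm] using this
    exact this.sub_const (x j0)
  have htot := (h1.add h2)
  have : (∑' k : ℕ, (((1 / 2 : ℝ) ^ (k + 1)) • x j0 + g k)) = xstar := by
    rw [htot.tsum_eq]
    simp
  rw [← this]
  exact tsum_congr hterm
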